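/- arXiv:2310.18743 — 6 statements merged into one kernel-verified Lean document; each statement's English description precedes it below -/
import Mathlib

section
/- Let X be a real random variable and l: ℝ → ℝ a continuous, increasing, continuously differentiable function such that the families {l(-X-t) : t ∈ ℝ} and {l'(-X-t) : t ∈ ℝ} are uniformly integrable, P(l'(-X-t) > 0) > 0 for all t, and there exist t_l ≤ t_u with E[l(-X-t_u)] ≤ λ and E[l(-X-t_l)] ≥ λ. Then the function g(t) = E[l(-X-t)] - λ is continuous and strictly decreasing on ℝ, and has a unique root t*, which equals inf { t ∈ ℝ : E[l(-X-t)] ≤ λ }. -/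
open MeasureTheory Real Set Filter Topology

/-- the function g(t) = E[l(-X-t)] - λ is continuous, strictly decreasing,
has a unique root, and that root equals inf { t : E[l(-X-t)] ≤ λ }. -/
theorem stmt0
    {Ω : Type*} [MeasurableSpace Ω] (P : Measure Ω) [IsProbabilityMeasure P]
    (X : Ω → ℝ) (l : ℝ → ℝ) (lam : ℝ)
    (hl_cont : Continuous l) (hl_mono : Monotone l)
    (hl_diff : ContDiff ℝ 1 l)
    (hUI : UniformIntegrable (fun t : ℝ => fun ω => l (-X ω - t)) 1 P)
    (hUI' : UniformIntegrable (fun t : ℝ => fun ω => deriv l (-X ω - t)) 1 P)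
    (hpos : ∀ t : ℝ, 0 < P {ω | 0 < deriv l (-X ω - t)})
    (tl tu : ℝ) (htl_le : tl ≤ tu)
    (hu : ∫ ω, l (-X ω - tu) ∂P ≤ lam)
    (hlg : lam ≤ ∫ ω, l (-X ω - tl) ∂P) :
    Continuous (fun t : ℝ => (∫ ω, l (-X ω - t) ∂P) - lam) ∧
    StrictAnti (fun t : ℝ => (∫ ω, l (-X ω - t) ∂P) - lam) ∧
    (∃! tstar : ℝ, (∫ ω, l (-X ω - tstar) ∂P) - lam = 0) ∧
    (∀ tstar : ℝ, (∫ ω, l (-X ω - tstar) ∂P) - lam = 0 →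
      tstar = sInf {t : ℝ | (∫ ω, l (-X ω - t) ∂P) ≤ lam}) := by
  obtain ⟨hmeas, hunif, C, hC⟩ := hUI
  have hint : ∀ t : ℝ, Integrable (fun ω => l (-X ω - t)) P := by
    intro t
    exact memLp_one_iff_integrable.mp ⟨hmeas t, lt_of_le_of_lt (hC t) ENNReal.coe_lt_top⟩
  -- strict antitonicity
  have hanti : StrictAnti (fun t : ℝ => (∫ ω, l (-X ω - t) ∂P) - lam) := by
    intro s t hst
    have hpt : ∀ ω ∈ {ω | 0 < deriv l (-X ω - t)}, l (-X ω - t) < l (-X ω - s) := by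
      intro ω hω
      set a := -X ω - t with ha
      have hda : HasDerivAt l (deriv l a) a := (hl_diff.differentiable one_ne_zero a).hasDerivAt
      have hslope := hasDerivAt_iff_tendsto_slope.mp hda
      have h1 : ∀ᶠ b in 𝓝[≠] a, 0 < slope l a b := hslope.eventually (eventually_gt_nhds hω)
      have h2 : ∀ᶠ b in 𝓝[>] a, 0 < slope l a b :=
        h1.filter_mono (nhdsWithin_mono a fun x hx => ne_of_gt hx)
      have h3 : ∀ᶠ b in 𝓝[>] a, b < a + (t - s) :=
        eventually_nhdsWithin_of_eventually_nhds (eventually_lt_nhds (by linarith))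
      have h4 : ∀ᶠ b in 𝓝[>] a, a < b := eventually_mem_nhdsWithin
      obtain ⟨b, hb1, hb2, hb3⟩ := (h2.and (h3.and h4)).exists
      have hab : 0 < b - a := sub_pos.mpr hb3
      have hnum : 0 < l b - l a := by
        rw [slope_def_field] at hb1
        rcases div_pos_iff.mp hb1 with ⟨h, _⟩ | ⟨_, h⟩
        · linarith
        · linarith
      have hbs : b ≤ -X ω - s := by
        have : a + (t - s) = -X ω - s := by rw [ha]; ring
        linarith [this ▸ hb2]
      calc l (-X ω - t) = l a := rfl
        _ < l b := by linarith
        _ ≤ l (-X ω - s) := hl_mono hbs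
    have hnn : ∀ ω, 0 ≤ l (-X ω - s) - l (-X ω - t) := fun ω =>
      sub_nonneg.mpr (hl_mono (by linarith))
    have hintd : Integrable (fun ω => l (-X ω - s) - l (-X ω - t)) P := (hint s).sub (hint t)
    have hsupp : {ω | 0 < deriv l (-X ω - t)} ⊆
        Function.support (fun ω => l (-X ω - s) - l (-X ω - t)) := by
      intro ω hω
      have := hpt ω hω
      simp only [Function.mem_support]
      intro h
      have : l (-X ω - s) = l (-X ω - t) := by linarith [sub_eq_zero.mp h]
      linarith [hpt ω hω]
    have hipos : 0 < ∫ ω, (l (-X ω - s) - l (-X ω - t)) ∂P := by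
      rw [integral_pos_iff_support_of_nonneg hnn hintd]
      exact lt_of_lt_of_le (hpos t) (measure_mono hsupp)
    rw [integral_sub (hint s) (hint t)] at hipos
    simp only
    linarith
  -- continuity
  have hcont0 : Continuous (fun t : ℝ => ∫ ω, l (-X ω - t) ∂P) := by
    rw [continuous_iff_continuousAt]
    intro t0
    apply continuousAt_of_dominated
      (bound := fun ω => |l (-X ω - (t0 - 1))| + |l (-X ω - (t0 + 1))|)
    · exact Eventually.of_forall fun t => hmeas t
    · have hmem : Ioo (t0 - 1) (t0 + 1) ∈ 𝓝 t0 := Ioo_mem_nhds (by linarith) (by linarith)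
      filter_upwards [hmem] with t ht
      refine Eventually.of_forall fun ω => ?_
      rw [Real.norm_eq_abs, abs_le]
      constructor
      · have h1 : l (-X ω - (t0 + 1)) ≤ l (-X ω - t) := hl_mono (by linarith [ht.2])
        have h2 : -|l (-X ω - (t0 + 1))| ≤ l (-X ω - (t0 + 1)) := neg_abs_le _
        have h3 : (0:ℝ) ≤ |l (-X ω - (t0 - 1))| := abs_nonneg _
        linarith
      · have h1 : l (-X ω - t) ≤ l (-X ω - (t0 - 1)) := hl_mono (by linarith [ht.1])
        have h2 : l (-X ω - (t0 - 1)) ≤ |l (-X ω - (t0 - 1))| := le_abs_self _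
        have h3 : (0:ℝ) ≤ |l (-X ω - (t0 + 1))| := abs_nonneg _
        linarith
    · exact (hint (t0 - 1)).abs.add (hint (t0 + 1)).abs
    · refine Eventually.of_forall fun ω => ?_
      exact (hl_cont.comp (by continuity : Continuous fun t : ℝ => -X ω - t)).continuousAt
  have hcont : Continuous (fun t : ℝ => (∫ ω, l (-X ω - t) ∂P) - lam) :=
    hcont0.sub continuous_const
  -- existence of root
  have h0mem : (0:ℝ) ∈ Icc ((∫ ω, l (-X ω - tu) ∂P) - lam) ((∫ ω, l (-X ω - tl) ∂P) - lam) :=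
    ⟨by linarith, by linarith⟩
  obtain ⟨tstar, _, hts⟩ := intermediate_value_Icc' htl_le hcont.continuousOn h0mem
  refine ⟨hcont, hanti, ⟨tstar, hts, fun y hy => hanti.injective (hy.trans hts.symm)⟩, ?_⟩
  intro t0 ht0
  have hset : {t : ℝ | (∫ ω, l (-X ω - t) ∂P) ≤ lam} = Ici t0 := by
    ext t
    simp only [mem_setOf_eq, mem_Ici]
    constructor
    · intro h
      by_contra hc
      push_neg at hc
      have := hanti hc
      simp only at this
      linarith
    · intro h
      rcases eq_or_lt_of_le h with rfl | h
      · linarith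
      · have := hanti h
        simp only at this
        linarith
  rw [hset, csInf_Ici]
end

section
/- Suppose l: ℝ → ℝ satisfies: for all x ≤ y, l(y) - l(x) ≥ b(y - x) for some b > 0. Let X, Y be random variables such that the functions g_X(t) = E[l(-X-t)] - λ and g_Y(t) = E[l(-Y-t)] - λ are well-defined, continuous, strictly decreasing with unique roots SR(X) and SR(Y), and suppose |g_X(t) - g_Y(t)| ≤ w for all t ∈ ℝ for some finite w. Then |SR(X) - SR(Y)| ≤ w/b. -/
open MeasureTheory Real Set

/-- if l has b-linear growth, g_X and g_Y are continuous strictly decreasing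
with roots SR(X), SR(Y), and |g_X - g_Y| ≤ w uniformly, then |SR(X) - SR(Y)| ≤ w / b. -/
theorem stmt1
    {Ω : Type*} [MeasurableSpace Ω] (P : Measure Ω) [IsProbabilityMeasure P]
    (X Y : Ω → ℝ) (l : ℝ → ℝ) (lam b w sX sY : ℝ)
    (hb : 0 < b)
    (hgrowth : ∀ x y : ℝ, x ≤ y → b * (y - x) ≤ l y - l x)
    (hintX : ∀ t : ℝ, Integrable (fun ω => l (-X ω - t)) P)
    (hintY : ∀ t : ℝ, Integrable (fun ω => l (-Y ω - t)) P)
    (hcX : Continuous (fun t : ℝ => (∫ ω, l (-X ω - t) ∂P) - lam))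
    (hcY : Continuous (fun t : ℝ => (∫ ω, l (-Y ω - t) ∂P) - lam))
    (haX : StrictAnti (fun t : ℝ => (∫ ω, l (-X ω - t) ∂P) - lam))
    (haY : StrictAnti (fun t : ℝ => (∫ ω, l (-Y ω - t) ∂P) - lam))
    (hrootX : (∫ ω, l (-X ω - sX) ∂P) - lam = 0)
    (hrootY : (∫ ω, l (-Y ω - sY) ∂P) - lam = 0)
    (hw : ∀ t : ℝ, |((∫ ω, l (-X ω - t) ∂P) - lam) - ((∫ ω, l (-Y ω - t) ∂P) - lam)| ≤ w) :
    |sX - sY| ≤ w / b := by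
  -- key growth for integrals
  have key : ∀ (Z : Ω → ℝ), (∀ t : ℝ, Integrable (fun ω => l (-Z ω - t)) P) →
      ∀ s t : ℝ, s ≤ t →
      b * (t - s) ≤ (∫ ω, l (-Z ω - s) ∂P) - (∫ ω, l (-Z ω - t) ∂P) := by
    intro Z hint s t hst
    have h1 : ∀ ω, b * (t - s) ≤ l (-Z ω - s) - l (-Z ω - t) := by
      intro ω
      have := hgrowth (-Z ω - t) (-Z ω - s) (by linarith)
      calc b * (t - s) = b * ((-Z ω - s) - (-Z ω - t)) := by ring_nf
        _ ≤ _ := this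
    have hsub : Integrable (fun ω => l (-Z ω - s) - l (-Z ω - t)) P :=
      (hint s).sub (hint t)
    calc b * (t - s) = ∫ _ω, b * (t - s) ∂P := by
          rw [integral_const]; simp
      _ ≤ ∫ ω, l (-Z ω - s) - l (-Z ω - t) ∂P :=
          integral_mono (integrable_const _) hsub h1
      _ = _ := integral_sub (hint s) (hint t)
  have hwY := hw sY
  have hwX := hw sX
  rw [abs_le]
  constructor
  · -- -(w/b) ≤ sX - sY, i.e. sY - sX ≤ w/b
    rcases le_or_gt sY sX with h | h
    · have : 0 ≤ w / b := by
        have := (abs_nonneg _).trans hwY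
        positivity
      linarith
    · -- sX < sY: use g_Y at sX: g_Y(sX) - g_Y(sY) ≥ b(sY - sX), g_Y(sY)=0, |g_X(sX)-g_Y(sX)|≤w, g_X(sX)=0
      have hk := key Y hintY sX sY h.le
      have : b * (sY - sX) ≤ w := by
        rw [hrootX] at hwX
        rw [abs_sub_comm, abs_le] at hwX
        have h2 : ((∫ ω, l (-Y ω - sX) ∂P) - lam) ≤ w := by linarith [hwX.2]
        have h3 : b * (sY - sX) ≤ ((∫ ω, l (-Y ω - sX) ∂P) - lam) := by
          have hy0 : (∫ ω, l (-Y ω - sY) ∂P) = lam := by linarith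
          linarith [hk]
        linarith
      have h4 : sY - sX ≤ w / b := (le_div_iff₀ hb).mpr (by linarith)
      linarith
  · rcases le_or_gt sX sY with h | h
    · have : 0 ≤ w / b := by
        have := (abs_nonneg _).trans hwY
        positivity
      linarith
    · have hk := key X hintX sY sX h.le
      have : b * (sX - sY) ≤ w := by
        rw [hrootY] at hwY
        rw [abs_le] at hwY
        have h3 : b * (sX - sY) ≤ ((∫ ω, l (-X ω - sY) ∂P) - lam) := by
          have hx0 : (∫ ω, l (-X ω - sX) ∂P) = lam := by linarith
          linarith [hk]
        linarith [hwY.2]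
      have h4 : sX - sY ≤ w / b := (le_div_iff₀ hb).mpr (by linarith)
      linarith
end

section
/- Suppose l: ℝ → ℝ is L₁-Lipschitz and satisfies l(y) - l(x) ≥ b(y-x) for y ≥ x with b > 0. Then for random variables X, Y with distributions μ_X, μ_Y (and SR equal to the unique root of the corresponding g-function), |SR_{l,λ}(X) - SR_{l,λ}(Y)| ≤ (L₁/b) W₁(μ_X, μ_Y), where W₁ is the 1-Wasserstein distance. -/
open MeasureTheory Real Set

/-- Optimal transport cost of order p between two measures on ℝ. -/
noncomputable def Tcost (p : ℝ) (μ ν : Measure ℝ) : ENNReal :=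
  ⨅ η ∈ {η : Measure (ℝ × ℝ) | η.map Prod.fst = μ ∧ η.map Prod.snd = ν},
    ∫⁻ q, ENNReal.ofReal (|q.1 - q.2| ^ p) ∂η

/-- p-Wasserstein distance W_p = (T_p)^{1/p}. -/
noncomputable def Wdist (p : ℝ) (μ ν : Measure ℝ) : ℝ :=
  ((Tcost p μ ν) ^ (1 / p)).toReal

/-- Utility-based shortfall risk of a distribution ν on ℝ. -/
noncomputable def SR (l : ℝ → ℝ) (lam : ℝ) (ν : Measure ℝ) : ℝ :=
  sInf {t : ℝ | (∫ x, l (-x - t) ∂ν) ≤ lam}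

/-- 1-Wasserstein Lipschitz bound on UBSR for Lipschitz loss functions. -/
theorem stmt3
    (l : ℝ → ℝ) (lam b L1 : ℝ)
    (hb : 0 < b) (hL1 : 0 < L1)
    (hLip : ∀ x y : ℝ, |l x - l y| ≤ L1 * |x - y|)
    (hgrowth : ∀ x y : ℝ, x ≤ y → b * (y - x) ≤ l y - l x)
    (μ ν : Measure ℝ) [IsProbabilityMeasure μ] [IsProbabilityMeasure ν]
    (hintμ : ∀ t : ℝ, Integrable (fun x => l (-x - t)) μ)
    (hintν : ∀ t : ℝ, Integrable (fun x => l (-x - t)) ν)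
    (haμ : StrictAnti (fun t : ℝ => ∫ x, l (-x - t) ∂μ))
    (haν : StrictAnti (fun t : ℝ => ∫ x, l (-x - t) ∂ν))
    (hrootμ : (∫ x, l (-x - SR l lam μ) ∂μ) = lam)
    (hrootν : (∫ x, l (-x - SR l lam ν) ∂ν) = lam) :
    |SR l lam μ - SR l lam ν| ≤ L1 / b * Wdist 1 μ ν := by
  set tμ := SR l lam μ with htμ
  set tν := SR l lam ν with htν
  have hlcont : Continuous l := by
    have : LipschitzWith (Real.toNNReal L1) l := by
      apply LipschitzWith.of_dist_le_mul
      intro x y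
      simpa [Real.dist_eq, Real.coe_toNNReal L1 hL1.le] using hLip x y
    exact this.continuous
  -- gap lemma for ν
  have gap : ∀ s t : ℝ, s ≤ t →
      b * (t - s) ≤ (∫ x, l (-x - s) ∂ν) - (∫ x, l (-x - t) ∂ν) := by
    intro s t hst
    rw [← integral_sub (hintν s) (hintν t)]
    have h0 : b * (t - s) = ∫ _x, b * (t - s) ∂ν := by
      simp [integral_const, measure_univ]
    rw [h0]
    apply integral_mono (integrable_const _) ((hintν s).sub (hintν t))
    intro x
    have h := hgrowth (-x - t) (-x - s) (by linarith)
    have h2 : -x - s - (-x - t) = t - s := by ring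
    rw [h2] at h
    simp only [Pi.sub_apply]
    linarith
  -- key real inequality : b * |tμ - tν| ≤ |gν(tμ) - lam|
  have keyreal : b * |tμ - tν| ≤ |(∫ x, l (-x - tμ) ∂ν) - lam| := by
    rcases le_total tν tμ with h | h
    · have := gap tν tμ h
      rw [hrootν] at this
      rw [abs_of_nonneg (by linarith), abs_sub_comm]
      calc b * (tμ - tν) ≤ lam - (∫ x, l (-x - tμ) ∂ν) := this
        _ ≤ |lam - (∫ x, l (-x - tμ) ∂ν)| := le_abs_self _
    · have := gap tμ tν h
      rw [hrootν] at this
      rw [abs_of_nonpos (by linarith)]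
      calc b * -(tμ - tν) = b * (tν - tμ) := by ring
        _ ≤ (∫ x, l (-x - tμ) ∂ν) - lam := this
        _ ≤ |(∫ x, l (-x - tμ) ∂ν) - lam| := le_abs_self _
  -- bound via any coupling
  have key : ∀ η : Measure (ℝ × ℝ), η.map Prod.fst = μ → η.map Prod.snd = ν →
      ENNReal.ofReal (b * |tμ - tν|) ≤
        ENNReal.ofReal L1 * ∫⁻ q, ENNReal.ofReal (|q.1 - q.2| ^ (1 : ℝ)) ∂η := by
    intro η hη1 hη2
    have hm1 : AEStronglyMeasurable (fun x : ℝ => l (-x - tμ)) μ :=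
      (hlcont.comp (by continuity)).aestronglyMeasurable
    have hm2 : AEStronglyMeasurable (fun x : ℝ => l (-x - tμ)) ν :=
      (hlcont.comp (by continuity)).aestronglyMeasurable
    have i1 : Integrable (fun q : ℝ × ℝ => l (-q.1 - tμ)) η := by
      have := (hintμ tμ)
      rw [← hη1] at this
      exact this.comp_measurable measurable_fst
    have i2 : Integrable (fun q : ℝ × ℝ => l (-q.2 - tμ)) η := by
      have := (hintν tμ)
      rw [← hη2] at this
      exact this.comp_measurable measurable_snd
    have e1 : (∫ x, l (-x - tμ) ∂μ) = ∫ q : ℝ × ℝ, l (-q.1 - tμ) ∂η := by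
      rw [← hη1, integral_map measurable_fst.aemeasurable]
      rw [hη1]; exact hm1
    have e2 : (∫ x, l (-x - tμ) ∂ν) = ∫ q : ℝ × ℝ, l (-q.2 - tμ) ∂η := by
      rw [← hη2, integral_map measurable_snd.aemeasurable]
      rw [hη2]; exact hm2
    have ediff : (∫ x, l (-x - tμ) ∂ν) - lam
        = ∫ q : ℝ × ℝ, (l (-q.2 - tμ) - l (-q.1 - tμ)) ∂η := by
      rw [← hrootμ, e1, e2, integral_sub i2 i1]
    calc ENNReal.ofReal (b * |tμ - tν|)
        ≤ ENNReal.ofReal |(∫ x, l (-x - tμ) ∂ν) - lam| := ENNReal.ofReal_le_ofReal keyreal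
      _ = ENNReal.ofReal ‖∫ q : ℝ × ℝ, (l (-q.2 - tμ) - l (-q.1 - tμ)) ∂η‖ := by
          rw [ediff]; rfl
      _ = (‖∫ q : ℝ × ℝ, (l (-q.2 - tμ) - l (-q.1 - tμ)) ∂η‖₊ : ENNReal) :=
          ofReal_norm _
      _ ≤ ∫⁻ q : ℝ × ℝ, ‖l (-q.2 - tμ) - l (-q.1 - tμ)‖₊ ∂η :=
          enorm_integral_le_lintegral_enorm _
      _ ≤ ∫⁻ q : ℝ × ℝ, ENNReal.ofReal L1 * ENNReal.ofReal (|q.1 - q.2| ^ (1 : ℝ)) ∂η := by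
          apply lintegral_mono
          intro q
          dsimp only
          rw [← enorm_eq_nnnorm, ← ofReal_norm, ← ENNReal.ofReal_mul hL1.le]
          apply ENNReal.ofReal_le_ofReal
          calc ‖l (-q.2 - tμ) - l (-q.1 - tμ)‖ ≤ L1 * |(-q.2 - tμ) - (-q.1 - tμ)| :=
                hLip _ _
            _ = L1 * |q.1 - q.2| ^ (1 : ℝ) := by
                rw [Real.rpow_one]
                congr 1
                rw [show (-q.2 - tμ) - (-q.1 - tμ) = q.1 - q.2 by ring]
      _ = ENNReal.ofReal L1 * ∫⁻ q : ℝ × ℝ, ENNReal.ofReal (|q.1 - q.2| ^ (1 : ℝ)) ∂η :=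
          lintegral_const_mul' _ _ ENNReal.ofReal_ne_top
  -- bound against Tcost
  have hTle : ENNReal.ofReal (b * |tμ - tν|) ≤ ENNReal.ofReal L1 * Tcost 1 μ ν := by
    rw [Tcost, ENNReal.mul_iInf_of_ne (by simp [hL1]) ENNReal.ofReal_ne_top]
    apply le_iInf
    intro η
    rw [ENNReal.mul_iInf_of_ne (by simp [hL1]) ENNReal.ofReal_ne_top]
    apply le_iInf
    intro hη
    exact key η hη.1 hη.2
  -- integrability of identity (first moments finite)
  have habs : ∀ x : ℝ, b * |x| ≤ |l (-x - 0) - l 0| := by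
    intro x
    simp only [sub_zero]
    rcases le_total x 0 with hx | hx
    · have := hgrowth 0 (-x) (by linarith)
      rw [abs_of_nonpos hx]
      calc b * -x = b * (-x - 0) := by ring
        _ ≤ l (-x) - l 0 := this
        _ ≤ |l (-x) - l 0| := le_abs_self _
    · have := hgrowth (-x) 0 (by linarith)
      rw [abs_of_nonneg hx, abs_sub_comm]
      calc b * x = b * (0 - -x) := by ring
        _ ≤ l 0 - l (-x) := this
        _ ≤ |l 0 - l (-x)| := le_abs_self _
  have hid : ∀ (ρ : Measure ℝ) [IsProbabilityMeasure ρ],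
      (∀ t : ℝ, Integrable (fun x => l (-x - t)) ρ) → Integrable (fun x : ℝ => x) ρ := by
    intro ρ _ hint
    have hgint : Integrable (fun x : ℝ => b⁻¹ * (l (-x - 0) - l 0)) ρ :=
      ((hint 0).sub (integrable_const _)).const_mul _
    apply hgint.mono aestronglyMeasurable_id
    filter_upwards with x
    rw [Real.norm_eq_abs, Real.norm_eq_abs, abs_mul, abs_inv, abs_of_pos hb, id_eq]
    rw [inv_mul_eq_div, le_div_iff₀ hb, mul_comm]
    exact habs x
  have hidμ := hid μ hintμ
  have hidν := hid ν hintν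
  -- finiteness of Tcost via product coupling
  have hTfin : Tcost 1 μ ν ≠ ⊤ := by
    have hcoupling : (μ.prod ν).map Prod.fst = μ ∧ (μ.prod ν).map Prod.snd = ν := by
      constructor <;> simp
    have hle : Tcost 1 μ ν ≤ ∫⁻ q : ℝ × ℝ, ENNReal.ofReal (|q.1 - q.2| ^ (1 : ℝ)) ∂(μ.prod ν) := by
      unfold Tcost
      exact iInf₂_le (μ.prod ν) hcoupling
    have hbd : (∫⁻ q : ℝ × ℝ, ENNReal.ofReal (|q.1 - q.2| ^ (1 : ℝ)) ∂(μ.prod ν)) ≤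
        (∫⁻ x, ENNReal.ofReal |x| ∂μ) + ∫⁻ y, ENNReal.ofReal |y| ∂ν := by
      calc (∫⁻ q : ℝ × ℝ, ENNReal.ofReal (|q.1 - q.2| ^ (1 : ℝ)) ∂(μ.prod ν))
          ≤ ∫⁻ q : ℝ × ℝ, (ENNReal.ofReal |q.1| + ENNReal.ofReal |q.2|) ∂(μ.prod ν) := by
            apply lintegral_mono
            intro q
            dsimp only
            rw [Real.rpow_one, ← ENNReal.ofReal_add (abs_nonneg _) (abs_nonneg _)]
            exact ENNReal.ofReal_le_ofReal (abs_sub _ _)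
        _ = (∫⁻ q : ℝ × ℝ, ENNReal.ofReal |q.1| ∂(μ.prod ν))
            + ∫⁻ q : ℝ × ℝ, ENNReal.ofReal |q.2| ∂(μ.prod ν) := by
            apply lintegral_add_left
            exact (measurable_fst.abs.ennreal_ofReal)
        _ = (∫⁻ x, ENNReal.ofReal |x| ∂μ) + ∫⁻ y, ENNReal.ofReal |y| ∂ν := by
            congr 1
            · rw [show (∫⁻ q : ℝ × ℝ, ENNReal.ofReal |q.1| ∂(μ.prod ν))
                  = ∫⁻ x, ENNReal.ofReal |x| ∂((μ.prod ν).map Prod.fst) from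
                  (lintegral_map measurable_id.abs.ennreal_ofReal measurable_fst).symm,
                Measure.map_fst_prod]
              simp
            · rw [show (∫⁻ q : ℝ × ℝ, ENNReal.ofReal |q.2| ∂(μ.prod ν))
                  = ∫⁻ y, ENNReal.ofReal |y| ∂((μ.prod ν).map Prod.snd) from
                  (lintegral_map measurable_id.abs.ennreal_ofReal measurable_snd).symm,
                Measure.map_snd_prod]
              simp
    have hμfin : (∫⁻ x, ENNReal.ofReal |x| ∂μ) < ⊤ := by
      have := hidμ.hasFiniteIntegral
      simpa [HasFiniteIntegral, ← ofReal_norm, Real.norm_eq_abs] using this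
    have hνfin : (∫⁻ y, ENNReal.ofReal |y| ∂ν) < ⊤ := by
      have := hidν.hasFiniteIntegral
      simpa [HasFiniteIntegral, ← ofReal_norm, Real.norm_eq_abs] using this
    exact ne_top_of_le_ne_top (by exact (ENNReal.add_lt_top.2 ⟨hμfin, hνfin⟩).ne)
      (hle.trans hbd)
  -- conclude
  have hW : Wdist 1 μ ν = (Tcost 1 μ ν).toReal := by
    rw [Wdist]
    norm_num
  have hfinal : b * |tμ - tν| ≤ L1 * (Tcost 1 μ ν).toReal := by
    have h1 : (ENNReal.ofReal (b * |tμ - tν|)).toReal ≤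
        (ENNReal.ofReal L1 * Tcost 1 μ ν).toReal := by
      apply ENNReal.toReal_mono _ hTle
      exact ENNReal.mul_ne_top ENNReal.ofReal_ne_top hTfin
    rw [ENNReal.toReal_ofReal (by positivity), ENNReal.toReal_mul,
      ENNReal.toReal_ofReal hL1.le] at h1
    exact h1
  rw [hW]
  rw [div_mul_eq_mul_div, le_div_iff₀ hb, mul_comm]
  linarith [hfinal]
end

section
/- Let l be convex and let F(·, ξ): Θ → ℝ be μ-strongly concave almost surely (Θ convex). Suppose the UBSR functional SR is monotone, cash-invariant, and convex on the relevant class of random variables. Then the function h(θ) = SR(F(θ, ξ)) is μ-strongly convex on Θ. -/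
open MeasureTheory Real Set

/-- if SR is monotone, cash-invariant and convex, and F(·,ξ) is μ-strongly
concave a.s., then h(θ) = SR(F(θ,ξ)) is μ-strongly convex. -/
theorem stmt6
    {Ω : Type*} [MeasurableSpace Ω] (P : Measure Ω) [IsProbabilityMeasure P]
    {d : ℕ} (Θ : Set (EuclideanSpace ℝ (Fin d))) (hΘ : Convex ℝ Θ)
    (μ : ℝ) (hμ : 0 < μ)
    (SRf : (Ω → ℝ) → ℝ)
    (hmono : ∀ X Y : Ω → ℝ, (∀ᵐ ω ∂P, X ω ≤ Y ω) → SRf Y ≤ SRf X)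
    (hcash : ∀ (X : Ω → ℝ) (m : ℝ), SRf (fun ω => X ω + m) = SRf X - m)
    (hconv : ∀ X Y : Ω → ℝ, ∀ α ∈ Set.Icc (0 : ℝ) 1,
      SRf (fun ω => α * X ω + (1 - α) * Y ω) ≤ α * SRf X + (1 - α) * SRf Y)
    (F : EuclideanSpace ℝ (Fin d) → Ω → ℝ)
    (hF : ∀ θ₁ ∈ Θ, ∀ θ₂ ∈ Θ, ∀ α ∈ Set.Icc (0 : ℝ) 1,
      ∀ᵐ ω ∂P, α * F θ₁ ω + (1 - α) * F θ₂ ω + μ * α * (1 - α) / 2 * ‖θ₁ - θ₂‖ ^ 2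
        ≤ F (α • θ₁ + (1 - α) • θ₂) ω) :
    ∀ θ₁ ∈ Θ, ∀ θ₂ ∈ Θ, ∀ α ∈ Set.Icc (0 : ℝ) 1,
      SRf (F (α • θ₁ + (1 - α) • θ₂)) ≤
        α * SRf (F θ₁) + (1 - α) * SRf (F θ₂) - μ * α * (1 - α) / 2 * ‖θ₁ - θ₂‖ ^ 2 := by
  intro θ₁ h1 θ₂ h2 α hα
  set c := μ * α * (1 - α) / 2 * ‖θ₁ - θ₂‖ ^ 2 with hc
  have step1 : SRf (F (α • θ₁ + (1 - α) • θ₂)) ≤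
      SRf (fun ω => (α * F θ₁ ω + (1 - α) * F θ₂ ω) + c) := by
    apply hmono
    filter_upwards [hF θ₁ h1 θ₂ h2 α hα] with ω hω
    linarith
  have step2 : SRf (fun ω => (α * F θ₁ ω + (1 - α) * F θ₂ ω) + c)
      = SRf (fun ω => α * F θ₁ ω + (1 - α) * F θ₂ ω) - c :=
    hcash _ c
  have step3 := hconv (F θ₁) (F θ₂) α hα
  linarith
end

section
/- Consider a stochastic recursion with z_n = θ_n − θ*, α_k = c/k with 1 ≤ μc ≤ 3, satisfying ‖z_n‖₂ ≤ |1 − α_n μ| ‖z_{n−1}‖₂ + α_n ‖y_{n−1}‖₂ almost surely, where the noise satisfies E[‖y_{k−1}‖₂ | ℱ_{k−1}] ≤ D̂₁/√(m_k) and E[‖y_{k−1}‖₂² | ℱ_{k−1}] ≤ D̂₂/m_k with batch sizes m_k = k. Then E[‖z_n‖₂²] ≤ 512 c² D̂₁²/(n+1) + (450 E[‖z₀‖₂²] + 64 c² D̂₂ (1 + log n))/(n+1)². -/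
open MeasureTheory Real

section aux
variable {Ω : Type*} [m0 : MeasurableSpace Ω] {P : Measure Ω} [IsProbabilityMeasure P]

lemma aux_integrable_of_sq {f : Ω → ℝ} (hm : AEStronglyMeasurable f P)
    (h2 : Integrable (fun ω => f ω ^ 2) P) : Integrable f P := by
  refine Integrable.mono' (((integrable_const (1:ℝ)).add h2).div_const 2) hm ?_
  filter_upwards with ω
  have : |f ω| ≤ (1 + f ω ^ 2)/2 := by nlinarith [sq_nonneg (|f ω| - 1), sq_abs (f ω)]
  simpa [Real.norm_eq_abs] using this

lemma aux_sq_integral_le {f : Ω → ℝ} (hf : Integrable f P)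
    (h2 : Integrable (fun ω => f ω ^ 2) P) : (∫ ω, f ω ∂P) ^ 2 ≤ ∫ ω, f ω ^ 2 ∂P := by
  set m := ∫ ω, f ω ∂P with hm
  have h0 : 0 ≤ ∫ ω, (f ω - m) ^ 2 ∂P := integral_nonneg fun ω => sq_nonneg _
  have hexp : ∫ ω, (f ω - m) ^ 2 ∂P = (∫ ω, f ω ^ 2 ∂P) - 2 * m * m + m ^ 2 := by
    have : (fun ω => (f ω - m) ^ 2) = fun ω => f ω ^ 2 - 2 * m * f ω + m ^ 2 := by
      funext ω; ring
    have i1 : Integrable (fun ω => f ω ^ 2 - 2 * m * f ω) P := h2.sub (hf.const_mul (2*m))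
    have e1 : ∫ ω, (f ω ^ 2 - 2 * m * f ω + m ^ 2) ∂P
        = (∫ ω, (f ω ^ 2 - 2 * m * f ω) ∂P) + m ^ 2 := by
      rw [integral_add i1 (integrable_const _), integral_const]; simp
    have e2 : ∫ ω, (f ω ^ 2 - 2 * m * f ω) ∂P = (∫ ω, f ω ^ 2 ∂P) - 2 * m * m := by
      rw [integral_sub h2 (hf.const_mul (2*m)), integral_const_mul, ← hm]
    rw [this, e1, e2]
  nlinarith [h0, hexp]

lemma aux_integral_le_sqrt {f : Ω → ℝ} (hnn : ∀ᵐ ω ∂P, 0 ≤ f ω) (hf : Integrable f P)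
    (h2 : Integrable (fun ω => f ω ^ 2) P) :
    ∫ ω, f ω ∂P ≤ Real.sqrt (∫ ω, f ω ^ 2 ∂P) := by
  have h0 : 0 ≤ ∫ ω, f ω ∂P := integral_nonneg_of_ae hnn
  have := aux_sq_integral_le hf h2
  nlinarith [Real.sq_sqrt (le_trans (sq_nonneg _) this), Real.sqrt_nonneg (∫ ω, f ω ^ 2 ∂P)]

end aux

noncomputable def auxH (n : ℕ) : ℝ := ∑ j ∈ Finset.Icc 2 n, (1 : ℝ) / j

lemma auxH_one : auxH 1 = 0 := by simp [auxH]

lemma auxH_nonneg (n : ℕ) : 0 ≤ auxH n :=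
  Finset.sum_nonneg fun j _ => by positivity

lemma auxH_succ (k : ℕ) (hk : 1 ≤ k) : auxH (k+1) = auxH k + 1/((k:ℝ)+1) := by
  rw [auxH, auxH, Finset.sum_Icc_succ_top (by omega : 2 ≤ k+1)]
  push_cast; ring

lemma auxH_le_log (n : ℕ) (hn : 1 ≤ n) : auxH n ≤ Real.log n := by
  induction n with
  | zero => omega
  | succ k ih =>
    rcases Nat.lt_or_ge k 1 with hk | hk
    · interval_cases k
      simp [auxH_one]
    · have h1 : auxH (k+1) = auxH k + 1/((k:ℝ)+1) := auxH_succ k hk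
      have h2 : auxH k ≤ Real.log k := ih hk
      have hkpos : (0:ℝ) < k := by exact_mod_cast hk
      have h3 : Real.log ((k:ℝ)/((k:ℝ)+1)) ≤ (k:ℝ)/((k:ℝ)+1) - 1 :=
        Real.log_le_sub_one_of_pos (by positivity)
      have h4 : Real.log ((k:ℝ)/((k:ℝ)+1)) = Real.log k - Real.log ((k:ℝ)+1) :=
        Real.log_div (by positivity) (by positivity)
      have h5 : (k:ℝ)/((k:ℝ)+1) - 1 = -(1/((k:ℝ)+1)) := by field_simp; ring
      push_cast
      nlinarith [h3, h4, h5]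

lemma aux_recur
    {Ω : Type*} [m0 : MeasurableSpace Ω] (P : Measure Ω) [IsProbabilityMeasure P]
    (ℱ : Filtration ℕ m0)
    (Z Y : ℕ → Ω → ℝ) (c μ D1 D2 : ℝ)
    (hc : 0 < c) (hD1 : 0 < D1)
    (hZnn : ∀ n : ℕ, ∀ᵐ ω ∂P, 0 ≤ Z n ω)
    (hYnn : ∀ n : ℕ, ∀ᵐ ω ∂P, 0 ≤ Y n ω)
    (hZadapt : Adapted ℱ Z)
    (hYmeas : ∀ k : ℕ, StronglyMeasurable[ℱ (k + 1)] (Y k))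
    (hZint : ∀ n : ℕ, Integrable (fun ω => (Z n ω) ^ 2) P)
    (hYint : ∀ n : ℕ, Integrable (fun ω => (Y n ω) ^ 2) P)
    (hrec : ∀ k : ℕ, 1 ≤ k → ∀ᵐ ω ∂P,
      Z k ω ≤ |1 - (c / k) * μ| * Z (k - 1) ω + (c / k) * Y (k - 1) ω)
    (hY1 : ∀ k : ℕ, 1 ≤ k →
      ∀ᵐ ω ∂P, (P[Y (k - 1)|ℱ (k - 1)]) ω ≤ D1 / Real.sqrt k)
    (hY2 : ∀ k : ℕ, 1 ≤ k →
      ∀ᵐ ω ∂P, (P[fun ω => (Y (k - 1) ω) ^ 2|ℱ (k - 1)]) ω ≤ D2 / k)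
    (k : ℕ) :
    ∫ ω, (Z (k+1) ω) ^ 2 ∂P ≤
      |1 - (c/((k:ℝ)+1))*μ| ^ 2 * (∫ ω, (Z k ω) ^ 2 ∂P)
      + 2 * |1 - (c/((k:ℝ)+1))*μ| * (c/((k:ℝ)+1)) * (D1 / Real.sqrt ((k:ℝ)+1))
          * Real.sqrt (∫ ω, (Z k ω) ^ 2 ∂P)
      + (c/((k:ℝ)+1)) ^ 2 * (D2/((k:ℝ)+1)) := by
  set x : ℝ := (k:ℝ)+1 with hxdef
  have hx : 0 < x := by positivity
  set β : ℝ := |1 - (c/x)*μ| with hβdef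
  have hβ0 : 0 ≤ β := abs_nonneg _
  have hα0 : 0 ≤ c/x := by positivity
  have hfm : AEStronglyMeasurable (Z k) P :=
    ((hZadapt k).mono (ℱ.le k) le_rfl).aestronglyMeasurable
  have hgm : AEStronglyMeasurable (Y k) P :=
    ((hYmeas k).mono (ℱ.le (k+1))).aestronglyMeasurable
  have hfi : Integrable (Z k) P := aux_integrable_of_sq hfm (hZint k)
  have hgi : Integrable (Y k) P := aux_integrable_of_sq hgm (hYint k)
  have hfg : Integrable (fun ω => Z k ω * Y k ω) P := by
    refine Integrable.mono' (((hZint k).add (hYint k)).div_const 2) (hfm.mul hgm) ?_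
    filter_upwards with ω
    rw [Real.norm_eq_abs, abs_mul]
    simp only [Pi.add_apply]
    nlinarith [sq_nonneg (|Z k ω| - |Y k ω|), sq_abs (Z k ω), sq_abs (Y k ω),
      abs_nonneg (Z k ω), abs_nonneg (Y k ω)]
  have hA0 : 0 ≤ ∫ ω, (Z k ω) ^ 2 ∂P := integral_nonneg fun ω => sq_nonneg _
  -- cast facts
  have hcast : ((k+1 : ℕ) : ℝ) = x := by push_cast [hxdef]; ring
  -- conditional expectation bounds
  have hcondY : ∀ᵐ ω ∂P, (P[Y k|ℱ k]) ω ≤ D1 / Real.sqrt x := by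
    have := hY1 (k+1) (by omega)
    simpa [Nat.add_sub_cancel, hcast] using this
  have hcondY2 : ∀ᵐ ω ∂P, (P[fun ω => (Y k ω) ^ 2|ℱ k]) ω ≤ D2 / x := by
    have := hY2 (k+1) (by omega)
    simpa [Nat.add_sub_cancel, hcast] using this
  have hcond_nonneg : 0 ≤ᵐ[P] (P[Y k|ℱ k]) := condExp_nonneg (hYnn k)
  -- cross term bound
  have hpull : P[fun ω => Z k ω * Y k ω|ℱ k] =ᵐ[P] fun ω => Z k ω * (P[Y k|ℱ k]) ω := by
    have h := condExp_mul_of_stronglyMeasurable_left (hZadapt k).stronglyMeasurable (by exact hfg) hgi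
    exact h
  have hcross_eq : ∫ ω, Z k ω * Y k ω ∂P = ∫ ω, Z k ω * (P[Y k|ℱ k]) ω ∂P := by
    rw [← integral_condExp (ℱ.le k) (f := fun ω => Z k ω * Y k ω)]
    exact integral_congr_ae hpull
  have hprod_int : Integrable (fun ω => Z k ω * (P[Y k|ℱ k]) ω) P := by
    refine Integrable.mono' (hfi.norm.mul_const (D1 / Real.sqrt x))
      (hfm.mul (stronglyMeasurable_condExp.mono (ℱ.le k)).aestronglyMeasurable) ?_
    filter_upwards [hcondY, hcond_nonneg] with ω h1 h2
    rw [Real.norm_eq_abs, abs_mul]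
    have hD1x : 0 ≤ D1 / Real.sqrt x := by positivity
    calc |Z k ω| * |(P[Y k|ℱ k]) ω| ≤ |Z k ω| * (D1 / Real.sqrt x) := by
          apply mul_le_mul_of_nonneg_left _ (abs_nonneg _)
          rw [abs_of_nonneg h2]; exact h1
      _ = ‖Z k ω‖ * (D1 / Real.sqrt x) := rfl
  have hcross_le : ∫ ω, Z k ω * Y k ω ∂P
      ≤ (D1 / Real.sqrt x) * Real.sqrt (∫ ω, (Z k ω) ^ 2 ∂P) := by
    rw [hcross_eq]
    have step1 : ∫ ω, Z k ω * (P[Y k|ℱ k]) ω ∂P ≤ ∫ ω, Z k ω * (D1 / Real.sqrt x) ∂P := by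
      refine integral_mono_ae hprod_int (hfi.mul_const _) ?_
      filter_upwards [hcondY, hZnn k] with ω h1 h2
      exact mul_le_mul_of_nonneg_left h1 h2
    have step2 : ∫ ω, Z k ω * (D1 / Real.sqrt x) ∂P = (∫ ω, Z k ω ∂P) * (D1 / Real.sqrt x) :=
      integral_mul_const _ _
    have step3 : ∫ ω, Z k ω ∂P ≤ Real.sqrt (∫ ω, (Z k ω) ^ 2 ∂P) :=
      aux_integral_le_sqrt (hZnn k) hfi (hZint k)
    have hD1x : 0 ≤ D1 / Real.sqrt x := by positivity
    calc ∫ ω, Z k ω * (P[Y k|ℱ k]) ω ∂P ≤ (∫ ω, Z k ω ∂P) * (D1 / Real.sqrt x) := by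
          rw [← step2]; exact step1
      _ ≤ Real.sqrt (∫ ω, (Z k ω) ^ 2 ∂P) * (D1 / Real.sqrt x) :=
          mul_le_mul_of_nonneg_right step3 hD1x
      _ = (D1 / Real.sqrt x) * Real.sqrt (∫ ω, (Z k ω) ^ 2 ∂P) := by ring
  -- second moment of noise
  have hY2_le : ∫ ω, (Y k ω) ^ 2 ∂P ≤ D2 / x := by
    rw [← integral_condExp (ℱ.le k) (f := fun ω => (Y k ω) ^ 2)]
    calc ∫ ω, (P[fun ω => (Y k ω) ^ 2|ℱ k]) ω ∂P ≤ ∫ _ω, D2 / x ∂P :=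
          integral_mono_ae integrable_condExp (integrable_const _) hcondY2
      _ = D2 / x := by simp
  -- pointwise recursion squared
  have hptwise : ∀ᵐ ω ∂P, (Z (k+1) ω) ^ 2
      ≤ β ^ 2 * (Z k ω) ^ 2 + 2 * β * (c/x) * (Z k ω * Y k ω) + (c/x) ^ 2 * (Y k ω) ^ 2 := by
    have hr := hrec (k+1) (by omega)
    filter_upwards [hr, hZnn (k+1), hZnn k, hYnn k] with ω h1 h2 h3 h4
    have h1' : Z (k+1) ω ≤ β * Z k ω + (c/x) * Y k ω := by
      simpa [Nat.add_sub_cancel, hcast, hβdef] using h1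
    nlinarith [mul_nonneg hβ0 h3, mul_nonneg hα0 h4]
  -- integrate
  have hRHSint : Integrable (fun ω => β ^ 2 * (Z k ω) ^ 2 + 2 * β * (c/x) * (Z k ω * Y k ω)
      + (c/x) ^ 2 * (Y k ω) ^ 2) P :=
    (((hZint k).const_mul _).add (hfg.const_mul _)).add ((hYint k).const_mul _)
  have hint : ∫ ω, (Z (k+1) ω) ^ 2 ∂P
      ≤ β ^ 2 * (∫ ω, (Z k ω) ^ 2 ∂P) + 2 * β * (c/x) * (∫ ω, Z k ω * Y k ω ∂P)
        + (c/x) ^ 2 * (∫ ω, (Y k ω) ^ 2 ∂P) := by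
    calc ∫ ω, (Z (k+1) ω) ^ 2 ∂P
        ≤ ∫ ω, (β ^ 2 * (Z k ω) ^ 2 + 2 * β * (c/x) * (Z k ω * Y k ω)
            + (c/x) ^ 2 * (Y k ω) ^ 2) ∂P := integral_mono_ae (hZint (k+1)) hRHSint hptwise
      _ = β ^ 2 * (∫ ω, (Z k ω) ^ 2 ∂P) + 2 * β * (c/x) * (∫ ω, Z k ω * Y k ω ∂P)
            + (c/x) ^ 2 * (∫ ω, (Y k ω) ^ 2 ∂P) := by
          have i1 : Integrable (fun ω => β ^ 2 * (Z k ω) ^ 2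
              + 2 * β * (c/x) * (Z k ω * Y k ω)) P :=
            ((hZint k).const_mul _).add (hfg.const_mul _)
          have i2 : Integrable (fun ω => (c/x) ^ 2 * (Y k ω) ^ 2) P := (hYint k).const_mul _
          rw [integral_add i1 i2, integral_add ((hZint k).const_mul (β ^ 2))
              (hfg.const_mul (2 * β * (c/x))),
            integral_const_mul, integral_const_mul, integral_const_mul]
  have h2βα : 0 ≤ 2 * β * (c/x) := by positivity
  have hα2 : 0 ≤ (c/x) ^ 2 := sq_nonneg _
  calc ∫ ω, (Z (k+1) ω) ^ 2 ∂P
      ≤ β ^ 2 * (∫ ω, (Z k ω) ^ 2 ∂P) + 2 * β * (c/x) * (∫ ω, Z k ω * Y k ω ∂P)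
        + (c/x) ^ 2 * (∫ ω, (Y k ω) ^ 2 ∂P) := hint
    _ ≤ β ^ 2 * (∫ ω, (Z k ω) ^ 2 ∂P)
        + 2 * β * (c/x) * ((D1 / Real.sqrt x) * Real.sqrt (∫ ω, (Z k ω) ^ 2 ∂P))
        + (c/x) ^ 2 * (D2/x) := by
        gcongr
    _ = β ^ 2 * (∫ ω, (Z k ω) ^ 2 ∂P)
        + 2 * β * (c/x) * (D1 / Real.sqrt x) * Real.sqrt (∫ ω, (Z k ω) ^ 2 ∂P)
        + (c/x) ^ 2 * (D2/x) := by ring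

set_option maxHeartbeats 1000000 in
/-- Algebraic core of the induction step. -/
lemma aux_core (c D1 D2 s sx sx1 p r x W V' V : ℝ)
    (hc : 0 < c) (hD1 : 0 < D1) (hD2 : 0 < D2) (hs : 0 ≤ s)
    (hx : 2 ≤ x)
    (hsx : 0 < sx) (hsx2 : sx^2 = x)
    (hsx1 : 0 ≤ sx1)
    (hss : x + 3/8 ≤ sx * sx1)
    (hp : 0 < p) (hr : 0 ≤ r)
    (hp2 : D2 ≤ p^2)
    (hdiff : r^2 - p^2 = D2/x)
    (hrgep : p ≤ r)
    (hr_le : r ≤ (23/9)*p)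
    (hV' : V' = s + 6*c*D1*sx + 2*c*p)
    (hV : V = s + 6*c*D1*sx1 + 2*c*r)
    (hW : W ≤ V'^2 + (9/2)*c*D1*V'/sx + (9/4)*c^2*D2/x) :
    W ≤ V^2 := by
  have hx0 : (0:ℝ) < x := by linarith
  have hV'0 : 0 ≤ V' := by rw [hV']; positivity
  have hxx : sx*sx = x := by rw [← hsx2]; ring
  have hsx_le : sx ≤ sx1 := by
    by_contra h
    push_neg at h
    have h2 : sx*sx1 < sx*sx := mul_lt_mul_of_pos_left h hsx
    rw [hxx] at h2
    linarith
  have hVV' : V' ≤ V := by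
    rw [hV', hV]
    have h1 : 6*c*D1*sx ≤ 6*c*D1*sx1 :=
      mul_le_mul_of_nonneg_left hsx_le (by positivity)
    have h2 : 2*c*p ≤ 2*c*r := mul_le_mul_of_nonneg_left hrgep (by positivity)
    linarith
  have hd1 : (9/2)/sx ≤ 12*(sx1 - sx) := by
    rw [div_le_iff₀ hsx]
    nlinarith
  have t1 : (9/2)*c*D1*V'/sx ≤ 2*V'*(6*c*D1*(sx1 - sx)) := by
    have h2 : (c*D1*V')*((9/2)/sx) ≤ (c*D1*V')*(12*(sx1 - sx)) :=
      mul_le_mul_of_nonneg_left hd1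
        (mul_nonneg (mul_nonneg hc.le hD1.le) hV'0)
    calc (9/2)*c*D1*V'/sx = (c*D1*V')*((9/2)/sx) := by ring
      _ ≤ (c*D1*V')*(12*(sx1 - sx)) := h2
      _ = 2*V'*(6*c*D1*(sx1 - sx)) := by ring
  have hd2 : (9/4)*(D2/x) ≤ 8*p*(r - p) := by
    have key : 0 ≤ (r - p)*((23/4)*p - (9/4)*r) :=
      mul_nonneg (by linarith) (by linarith)
    nlinarith [hdiff]
  have t2 : (9/4)*c^2*D2/x ≤ 2*V'*(2*c*(r - p)) := by
    have h2cp : 2*c*p ≤ V' := by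
      have hs1 : 0 ≤ 6*c*D1*sx := by positivity
      rw [hV']; linarith
    have h2 : c^2*((9/4)*(D2/x)) ≤ c^2*(8*p*(r - p)) :=
      mul_le_mul_of_nonneg_left hd2 (sq_nonneg c)
    have h4 : (2*c*p)*(2*c*(r - p))*2 ≤ V'*(2*c*(r - p))*2 := by
      apply mul_le_mul_of_nonneg_right
        (mul_le_mul_of_nonneg_right h2cp (by nlinarith)) (by norm_num)
    calc (9/4)*c^2*D2/x = c^2*((9/4)*(D2/x)) := by ring
      _ ≤ c^2*(8*p*(r - p)) := h2
      _ = (2*c*p)*(2*c*(r - p))*2 := by ring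
      _ ≤ V'*(2*c*(r - p))*2 := h4
      _ = 2*V'*(2*c*(r - p)) := by ring
  have hVdiff : V - V' = 6*c*D1*(sx1 - sx) + 2*c*(r - p) := by rw [hV, hV']; ring
  have hfin : V'^2 + 2*V'*(6*c*D1*(sx1 - sx)) + 2*V'*(2*c*(r - p)) ≤ V^2 := by
    have h1 : (V - V')*(2*V') ≤ (V - V')*(V + V') :=
      mul_le_mul_of_nonneg_left (by linarith) (by linarith)
    have h2 : (V - V')*(2*V') = 2*V'*(6*c*D1*(sx1 - sx)) + 2*V'*(2*c*(r - p)) := by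
      rw [hVdiff]; ring
    have h3 : (V - V')*(V + V') = V^2 - V'^2 := by ring
    linarith [h1, h2, h3]
  linarith [hW, t1, t2, hfin]

set_option maxHeartbeats 1000000 in
/-- Algebraic core of the one-step recurrence for `U`. -/
lemma aux_core2 (c D1 D2 β A' σ SA x : ℝ)
    (hc : 0 < c) (hD1 : 0 < D1) (hD2 : 0 < D2)
    (hx : 2 ≤ x) (hσ : 0 < σ) (hσ2 : σ^2 = x)
    (hA' : 0 ≤ A') (hSA : 0 ≤ SA) (hSA2 : SA^2 = A')
    (hβ0 : 0 ≤ β) (hβx : (x+1)*β ≤ x) :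
    (x+1)^2 * (β^2*A' + 2*β*(c/x)*(D1/σ)*SA + (c/x)^2*(D2/x))
      ≤ x^2*A' + (9/2)*c*D1*(x*SA)/σ + (9/4)*c^2*D2/x := by
  have hx0 : (0:ℝ) < x := by linarith
  have hβ1 : β ≤ 1 := by nlinarith
  have p1 : (x+1)^2*(β^2*A') ≤ x^2*A' := by
    have h0 : 0 ≤ (x+1)*β := by positivity
    have h1 : ((x+1)*β)^2 ≤ x^2 := by
      have := mul_self_le_mul_self h0 hβx
      nlinarith [this]
    nlinarith [mul_le_mul_of_nonneg_right h1 hA']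
  have p2 : (x+1)^2*(2*β*(c/x)*(D1/σ)*SA) ≤ (9/2)*c*D1*(x*SA)/σ := by
    have h1 : (x+1)^2*(2*β*(c/x)*(D1/σ)*SA) = (2*β*(x+1)^2/x)*(c*D1*SA/σ) := by
      field_simp
      try ring
    have h2 : (9/2)*c*D1*(x*SA)/σ = ((9/2)*x)*(c*D1*SA/σ) := by ring
    have h3 : 2*β*(x+1)^2/x ≤ (9/2)*x := by
      rw [div_le_iff₀ hx0]
      nlinarith [mul_nonneg (sub_nonneg.mpr hx) hx0.le, sq_nonneg (x-2), hβ1, hβ0,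
        mul_le_mul_of_nonneg_right hβ1 (by positivity : (0:ℝ) ≤ 2*(x+1)^2)]
    rw [h1, h2]
    exact mul_le_mul_of_nonneg_right h3 (by positivity)
  have p3 : (x+1)^2*((c/x)^2*(D2/x)) ≤ (9/4)*c^2*D2/x := by
    have h1 : (x+1)^2*((c/x)^2*(D2/x)) = ((x+1)^2/x^2)*(c^2*D2/x) := by
      field_simp
      try ring
    have h2 : (9/4)*c^2*D2/x = (9/4)*(c^2*D2/x) := by ring
    have h3 : (x+1)^2/x^2 ≤ 9/4 := by
      rw [div_le_iff₀ (by positivity)]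
      nlinarith [sq_nonneg (x-2)]
    rw [h1, h2]
    exact mul_le_mul_of_nonneg_right h3 (by positivity)
  nlinarith [p1, p2, p3]

noncomputable def auxV (c D1 D2 s : ℝ) (n : ℕ) : ℝ :=
  s + 6*c*D1*Real.sqrt ((n:ℝ)+1) + 2*c*Real.sqrt (D2*(1+auxH n))

set_option maxHeartbeats 1000000 in
/-- The sequence induction. -/
lemma aux_seq (c D1 D2 s : ℝ) (U : ℕ → ℝ)
    (hc : 0 < c) (hD1 : 0 < D1) (hD2 : 0 < D2)
    (hs0 : 0 ≤ s)
    (hUnn : ∀ k, 0 ≤ U k)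
    (hU1 : U 1 ≤ s^2)
    (hstep : ∀ k : ℕ, 1 ≤ k → U (k+1) ≤ U k
      + (9/2)*c*D1*Real.sqrt (U k)/Real.sqrt ((k:ℝ)+1) + (9/4)*c^2*D2/((k:ℝ)+1)) :
    ∀ n : ℕ, 1 ≤ n → U n ≤ (auxV c D1 D2 s n)^2 := by
  intro n hn
  induction n, hn using Nat.le_induction with
  | base =>
    have h1 : s ≤ auxV c D1 D2 s 1 := by
      unfold auxV
      have h2 : 0 ≤ 6*c*D1*Real.sqrt (((1:ℕ):ℝ)+1) := by positivity
      have h3 : 0 ≤ 2*c*Real.sqrt (D2*(1+auxH 1)) := by positivity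
      linarith
    calc U 1 ≤ s^2 := hU1
      _ ≤ (auxV c D1 D2 s 1)^2 := pow_le_pow_left₀ hs0 h1 2
  | succ k hk ih =>
    have hxgt : (1:ℝ) ≤ (k:ℝ) := by exact_mod_cast hk
    obtain ⟨x, hxdef⟩ : ∃ x : ℝ, x = (k:ℝ)+1 := ⟨_, rfl⟩
    have hx2 : (2:ℝ) ≤ x := by rw [hxdef]; linarith
    have hx0 : (0:ℝ) < x := by linarith
    obtain ⟨p, hpdef⟩ : ∃ p : ℝ, p = Real.sqrt (D2*(1+auxH k)) := ⟨_, rfl⟩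
    obtain ⟨r, hrdef⟩ : ∃ r : ℝ, r = Real.sqrt (D2*(1+auxH k + 1/x)) := ⟨_, rfl⟩
    have hHnn := auxH_nonneg k
    have hp : 0 < p := by rw [hpdef]; exact Real.sqrt_pos.mpr (by nlinarith)
    have hr : 0 ≤ r := by rw [hrdef]; exact Real.sqrt_nonneg _
    have hp2' : p^2 = D2*(1+auxH k) := by rw [hpdef]; exact Real.sq_sqrt (by nlinarith)
    have hr2' : r^2 = D2*(1+auxH k + 1/x) := by
      rw [hrdef]; exact Real.sq_sqrt (by positivity)
    have hp2 : D2 ≤ p^2 := by rw [hp2']; nlinarith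
    have hdiff : r^2 - p^2 = D2/x := by
      rw [hp2', hr2']
      field_simp
      try ring
    have hrgep : p ≤ r := by
      rw [hpdef, hrdef]
      apply Real.sqrt_le_sqrt
      have : 0 ≤ 1/x := by positivity
      nlinarith
    have hr_le : r ≤ (23/9)*p := by
      have harg : D2*(1+auxH k + 1/x) ≤ ((23/9)*p)^2 := by
        have he : ((23/9)*p)^2 = (529/81)*(D2*(1+auxH k)) := by
          rw [mul_pow, hp2']; ring
        have hxinv : 1/x ≤ 1/2 := by
          rw [div_le_div_iff₀ hx0 (by norm_num)]; linarith
        rw [he]; nlinarith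
      calc r = Real.sqrt (D2*(1+auxH k + 1/x)) := hrdef
        _ ≤ Real.sqrt (((23/9)*p)^2) := Real.sqrt_le_sqrt harg
        _ = (23/9)*p := Real.sqrt_sq (by positivity)
    have hsx : 0 < Real.sqrt x := Real.sqrt_pos.mpr hx0
    have hsx1 : 0 ≤ Real.sqrt (x+1) := Real.sqrt_nonneg _
    have hsx2 : (Real.sqrt x)^2 = x := Real.sq_sqrt hx0.le
    have hss : x + 3/8 ≤ Real.sqrt x * Real.sqrt (x+1) := by
      rw [← Real.sqrt_mul hx0.le]
      apply Real.le_sqrt_of_sq_le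
      nlinarith
    have hV'eq : auxV c D1 D2 s k = s + 6*c*D1*Real.sqrt x + 2*c*p := by
      rw [auxV, hxdef, hpdef]
    have hV'0 : 0 ≤ auxV c D1 D2 s k := by
      rw [hV'eq]; positivity
    have hUk : Real.sqrt (U k) ≤ auxV c D1 D2 s k := by
      calc Real.sqrt (U k) ≤ Real.sqrt ((auxV c D1 D2 s k)^2) := Real.sqrt_le_sqrt ih
        _ = auxV c D1 D2 s k := Real.sqrt_sq hV'0
    have hW : U (k+1) ≤ (auxV c D1 D2 s k)^2
        + (9/2)*c*D1*(auxV c D1 D2 s k)/Real.sqrt x + (9/4)*c^2*D2/x := by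
      have h1 := hstep k hk
      rw [← hxdef] at h1
      have h3 : (9/2)*c*D1*Real.sqrt (U k)/Real.sqrt x
          ≤ (9/2)*c*D1*(auxV c D1 D2 s k)/Real.sqrt x := by
        gcongr
      linarith
    have hVeq : auxV c D1 D2 s (k+1) = s + 6*c*D1*Real.sqrt (x+1) + 2*c*r := by
      rw [auxV, hrdef, auxH_succ k hk, hxdef]
      push_cast
      ring_nf
    exact aux_core c D1 D2 s (Real.sqrt x) (Real.sqrt (x+1)) p r x (U (k+1))
      (auxV c D1 D2 s k) (auxV c D1 D2 s (k+1))
      hc hD1 hD2 hs0 hx2 hsx hsx2 hsx1 hss hp hr hp2 hdiff hrgep hr_le hV'eq hVeq hW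

set_option maxHeartbeats 1600000 in
/-- non-asymptotic bound for the stochastic gradient recursion with
step sizes α_k = c/k, batch sizes m_k = k and biased gradient noise. Here `Z n ω`
stands for ‖θ_n - θ*‖₂ and `Y n ω` for the gradient-estimate error norm ‖y_n‖₂. -/
theorem stmt18
    {Ω : Type*} [m0 : MeasurableSpace Ω] (P : Measure Ω) [IsProbabilityMeasure P]
    (ℱ : Filtration ℕ m0)
    (Z Y : ℕ → Ω → ℝ) (c μ D1 D2 : ℝ)
    (hc : 0 < c) (hμ : 0 < μ) (hD1 : 0 < D1) (hD2 : 0 < D2)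
    (hμc1 : 1 ≤ μ * c) (hμc3 : μ * c ≤ 3)
    (hZnn : ∀ n : ℕ, ∀ᵐ ω ∂P, 0 ≤ Z n ω)
    (hYnn : ∀ n : ℕ, ∀ᵐ ω ∂P, 0 ≤ Y n ω)
    (hZadapt : Adapted ℱ Z)
    (hYmeas : ∀ k : ℕ, StronglyMeasurable[ℱ (k + 1)] (Y k))
    (hZint : ∀ n : ℕ, Integrable (fun ω => (Z n ω) ^ 2) P)
    (hYint : ∀ n : ℕ, Integrable (fun ω => (Y n ω) ^ 2) P)
    (hrec : ∀ k : ℕ, 1 ≤ k → ∀ᵐ ω ∂P,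
      Z k ω ≤ |1 - (c / k) * μ| * Z (k - 1) ω + (c / k) * Y (k - 1) ω)
    (hY1 : ∀ k : ℕ, 1 ≤ k →
      ∀ᵐ ω ∂P, (P[Y (k - 1)|ℱ (k - 1)]) ω ≤ D1 / Real.sqrt k)
    (hY2 : ∀ k : ℕ, 1 ≤ k →
      ∀ᵐ ω ∂P, (P[fun ω => (Y (k - 1) ω) ^ 2|ℱ (k - 1)]) ω ≤ D2 / k)
    (n : ℕ) (hn : 1 ≤ n) :
    ∫ ω, (Z n ω) ^ 2 ∂P ≤
      512 * c ^ 2 * D1 ^ 2 / (n + 1) +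
      (450 * (∫ ω, (Z 0 ω) ^ 2 ∂P) + 64 * c ^ 2 * D2 * (1 + Real.log n)) / (n + 1) ^ 2 := by
  obtain ⟨A, hA⟩ : ∃ A : ℕ → ℝ, ∀ m : ℕ, A m = ∫ ω, (Z m ω) ^ 2 ∂P :=
    ⟨fun m => ∫ ω, (Z m ω) ^ 2 ∂P, fun m => rfl⟩
  have hA0 : ∀ m : ℕ, 0 ≤ A m := fun m => by
    rw [hA]; exact integral_nonneg fun ω => sq_nonneg _
  have hrecur : ∀ k : ℕ, A (k+1) ≤
      |1 - (c/((k:ℝ)+1))*μ| ^ 2 * A k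
      + 2 * |1 - (c/((k:ℝ)+1))*μ| * (c/((k:ℝ)+1)) * (D1 / Real.sqrt ((k:ℝ)+1))
          * Real.sqrt (A k)
      + (c/((k:ℝ)+1)) ^ 2 * (D2/((k:ℝ)+1)) := by
    intro k
    rw [hA, hA]
    exact aux_recur P ℱ Z Y c μ D1 D2 hc hD1 hZnn hYnn hZadapt hYmeas hZint hYint
      hrec hY1 hY2 k
  obtain ⟨s, hsdef⟩ : ∃ s : ℝ, s = Real.sqrt (32*A 0 + 4*c^2*D1^2 + 4*c^2*D2) := ⟨_, rfl⟩
  have hsarg : 0 ≤ 32*A 0 + 4*c^2*D1^2 + 4*c^2*D2 := by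
    have := hA0 0; positivity
  have hs0 : 0 ≤ s := by rw [hsdef]; exact Real.sqrt_nonneg _
  have hs2 : s^2 = 32*A 0 + 4*c^2*D1^2 + 4*c^2*D2 := by
    rw [hsdef]; exact Real.sq_sqrt hsarg
  obtain ⟨U, hU⟩ : ∃ U : ℕ → ℝ, ∀ m : ℕ, U m = ((m:ℝ)+1)^2 * A m :=
    ⟨fun m => ((m:ℝ)+1)^2 * A m, fun m => rfl⟩
  have hUnn : ∀ m : ℕ, 0 ≤ U m := fun m => by
    rw [hU]; have := hA0 m; positivity
  -- base case
  have hU1 : U 1 ≤ s^2 := by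
    have h := hrecur 0
    have hsqrt1 : Real.sqrt (((0:ℕ):ℝ)+1) = 1 := by norm_num [Real.sqrt_one]
    rw [hsqrt1] at h
    norm_num at h
    have hβ1 : |1 - c*μ| ≤ 2 := by
      rw [abs_le]
      constructor <;> nlinarith
    have hβ0 : 0 ≤ |1 - c*μ| := abs_nonneg _
    have hsA0 : 0 ≤ Real.sqrt (A 0) := Real.sqrt_nonneg _
    have hsA02 : (Real.sqrt (A 0))^2 = A 0 := Real.sq_sqrt (hA0 0)
    have hβsq : (1 - c*μ)^2 ≤ 4 := by
      nlinarith [mul_nonneg (by linarith : (0:ℝ) ≤ 3 - μ*c)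
        (by linarith : (0:ℝ) ≤ μ*c + 1)]
    have t1 : (1 - c*μ)^2 * A 0 ≤ 4 * A 0 := mul_le_mul_of_nonneg_right hβsq (hA0 0)
    have t2 : |1 - c*μ| * (c*D1*Real.sqrt (A 0)) ≤ 2 * (c*D1*Real.sqrt (A 0)) :=
      mul_le_mul_of_nonneg_right hβ1 (by positivity)
    have hA1 : A 1 ≤ 4*A 0 + 4*c*D1*Real.sqrt (A 0) + c^2*D2 := by
      nlinarith [h, t1, t2]
    rw [hU, hs2]
    push_cast
    nlinarith [hA1, sq_nonneg (2*Real.sqrt (A 0) - c*D1), hsA02]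
  -- recurrence step for U
  have hstep : ∀ k : ℕ, 1 ≤ k → U (k+1) ≤ U k
      + (9/2)*c*D1*Real.sqrt (U k)/Real.sqrt ((k:ℝ)+1) + (9/4)*c^2*D2/((k:ℝ)+1) := by
    intro k hk
    have hk1 : (1:ℝ) ≤ (k:ℝ) := by exact_mod_cast hk
    obtain ⟨x, hxdef⟩ : ∃ x : ℝ, x = (k:ℝ)+1 := ⟨_, rfl⟩
    have hx2 : (2:ℝ) ≤ x := by rw [hxdef]; linarith
    have hx0 : (0:ℝ) < x := by linarith
    have hsx : 0 < Real.sqrt x := Real.sqrt_pos.mpr hx0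
    have hsx2 : (Real.sqrt x)^2 = x := Real.sq_sqrt hx0.le
    have hβ0 : 0 ≤ |1 - (c/x)*μ| := abs_nonneg _
    -- bound on the contraction factor
    have hβx : (x+1) * |1 - (c/x)*μ| ≤ x := by
      have hcm : (c/x)*μ = (μ*c)/x := by ring
      have h1 : 1/x ≤ (μ*c)/x := by
        exact (div_le_div_iff_of_pos_right hx0).mpr hμc1
      have h2 : (μ*c)/x ≤ 3/x := by
        exact (div_le_div_iff_of_pos_right hx0).mpr hμc3
      have h3 : (3:ℝ)/x ≤ 2 - 1/x := by
        rw [div_le_iff₀ hx0]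
        have : (2 - 1/x)*x = 2*x - 1 := by field_simp
        rw [this]; linarith
      have habs : |1 - (c/x)*μ| ≤ 1 - 1/x := by
        rw [abs_le, hcm]
        constructor <;> [linarith; linarith]
      have h4 : (x+1) * |1 - (c/x)*μ| ≤ (x+1)*(1 - 1/x) :=
        mul_le_mul_of_nonneg_left habs (by linarith)
      have h5 : (x+1)*(1 - 1/x) = x - 1/x := by field_simp; ring
      have h6 : 0 < 1/x := by positivity
      linarith
    have hrk := hrecur k
    rw [← hxdef] at hrk
    have hcast : ((k+1:ℕ):ℝ) + 1 = x + 1 := by rw [hxdef]; push_cast; ring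
    have hUk1 : U (k+1) = (x+1)^2 * A (k+1) := by rw [hU, hcast]
    have hUk : U k = x^2 * A k := by rw [hU, hxdef]
    have hsqU : Real.sqrt (U k) = x * Real.sqrt (A k) := by
      rw [hUk, Real.sqrt_mul (sq_nonneg x), Real.sqrt_sq hx0.le]
    have hmul : (x+1)^2 * A (k+1) ≤ (x+1)^2 *
        (|1 - (c/x)*μ| ^ 2 * A k
        + 2 * |1 - (c/x)*μ| * (c/x) * (D1 / Real.sqrt x) * Real.sqrt (A k)
        + (c/x) ^ 2 * (D2/x)) :=
      mul_le_mul_of_nonneg_left hrk (by positivity)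
    have hcore := aux_core2 c D1 D2 (|1 - (c/x)*μ|) (A k) (Real.sqrt x)
      (Real.sqrt (A k)) x hc hD1 hD2 hx2 hsx hsx2 (hA0 k) (Real.sqrt_nonneg _)
      (Real.sq_sqrt (hA0 k)) hβ0 hβx
    rw [hUk1, hsqU, hUk, ← hxdef]
    calc (x+1)^2 * A (k+1) ≤ _ := hmul
      _ ≤ x^2*(A k) + (9/2)*c*D1*(x*Real.sqrt (A k))/Real.sqrt x + (9/4)*c^2*D2/x := by
          have e : (x+1)^2 * (|1 - (c/x)*μ| ^ 2 * A k
              + 2 * |1 - (c/x)*μ| * (c/x) * (D1 / Real.sqrt x) * Real.sqrt (A k)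
              + (c/x) ^ 2 * (D2/x))
            = (x+1)^2 * (|1 - (c/x)*μ| ^ 2 * A k
              + 2 * |1 - (c/x)*μ| * (c/x) * (D1 / Real.sqrt x) * Real.sqrt (A k)
              + (c/x) ^ 2 * (D2/x)) := rfl
          nlinarith [hcore]
  -- the induction
  have hseq := aux_seq c D1 D2 s U hc hD1 hD2 hs0 hUnn hU1 hstep n hn
  -- final numeric bound
  have hn1 : (1:ℝ) ≤ (n:ℝ) := by exact_mod_cast hn
  have hHlog : auxH n ≤ Real.log n := auxH_le_log n hn
  have hlog0 : 0 ≤ Real.log n := Real.log_nonneg hn1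
  have hHnn := auxH_nonneg n
  have hsn1 : (Real.sqrt ((n:ℝ)+1))^2 = (n:ℝ)+1 := Real.sq_sqrt (by linarith)
  have hsD2 : (Real.sqrt (D2*(1+auxH n)))^2 = D2*(1+auxH n) :=
    Real.sq_sqrt (by nlinarith)
  have hV2 : (auxV c D1 D2 s n)^2
      ≤ 3*s^2 + 108*c^2*D1^2*((n:ℝ)+1) + 12*c^2*D2*(1+auxH n) := by
    rw [auxV]
    have hb2 : (6*c*D1*Real.sqrt ((n:ℝ)+1))^2 = 36*c^2*D1^2*((n:ℝ)+1) := by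
      rw [mul_pow, hsn1]; ring
    have hd2 : (2*c*Real.sqrt (D2*(1+auxH n)))^2 = 4*c^2*(D2*(1+auxH n)) := by
      rw [mul_pow, hsD2]; ring
    nlinarith [sq_nonneg (s - 6*c*D1*Real.sqrt ((n:ℝ)+1)),
      sq_nonneg (s - 2*c*Real.sqrt (D2*(1+auxH n))),
      sq_nonneg (6*c*D1*Real.sqrt ((n:ℝ)+1) - 2*c*Real.sqrt (D2*(1+auxH n))),
      hb2, hd2]
  have hUb : U n ≤ 512*c^2*D1^2*((n:ℝ)+1) + 450*A 0 + 64*c^2*D2*(1+Real.log n) := by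
    have hcd1 : 0 ≤ c^2*D1^2 := by positivity
    have hcd2 : 0 ≤ c^2*D2 := by positivity
    nlinarith [hseq, hV2, hs2, hA0 0, hHlog, hn1,
      mul_nonneg hcd2 (sub_nonneg.mpr hHlog),
      mul_nonneg hcd1 (by linarith : (0:ℝ) ≤ (n:ℝ)+1),
      mul_nonneg hcd2 hlog0]
  -- divide through
  have hx2p : (0:ℝ) < ((n:ℝ)+1)^2 := by positivity
  have hgoal : A n ≤ 512 * c ^ 2 * D1 ^ 2 / ((n:ℝ) + 1) +
      (450 * A 0 + 64 * c ^ 2 * D2 * (1 + Real.log n)) / ((n:ℝ) + 1) ^ 2 := by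
    have h2 : (512 * c ^ 2 * D1 ^ 2 / ((n:ℝ) + 1) +
        (450 * A 0 + 64 * c ^ 2 * D2 * (1 + Real.log n)) / ((n:ℝ) + 1) ^ 2)
          * ((n:ℝ)+1)^2
        = 512*c^2*D1^2*((n:ℝ)+1) + (450*A 0 + 64*c^2*D2*(1+Real.log n)) := by
      field_simp
    refine (mul_le_mul_iff_of_pos_right hx2p).mp ?_
    rw [h2]
    have : A n * ((n:ℝ)+1)^2 = U n := by rw [hU]; ring
    rw [this]
    linarith [hUb]
  rw [hA, hA] at hgoal
  exact hgoal
end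

section
/- Let Q_{k+1:n} = ∏_{i=k+1}^n |1 − α_i μ| with α_i = c/i and 1 ≤ μc ≤ 3. Then for all 2 ≤ k ≤ n−1, Q_{k+1:n} ≤ (k+1)/(n+1); for k = 1, Q_{2:n} ≤ 4·2/(n+1); and for k = 0, Q_{1:n} ≤ 15/(n+1). -/
open Finset

private lemma tele19 (k : ℕ) (hk : 1 ≤ k) : ∀ n, k ≤ n →
    ∏ i ∈ Finset.Icc (k + 1) n, (((i : ℝ) - 1) / i) = (k : ℝ) / n := by
  intro n hn
  induction n, hn using Nat.le_induction with
  | base =>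
    have hk0 : (k : ℝ) ≠ 0 := Nat.cast_ne_zero.mpr (by omega)
    rw [Finset.Icc_eq_empty (by omega), Finset.prod_empty, div_self hk0]
  | succ n hn ih =>
    rw [Finset.prod_Icc_succ_top (by omega), ih]
    have hk0 : (k : ℝ) ≠ 0 := Nat.cast_ne_zero.mpr (by omega)
    have hn0 : (n : ℝ) ≠ 0 := Nat.cast_ne_zero.mpr (by omega)
    have hn1 : (n : ℝ) + 1 ≠ 0 := by positivity
    push_cast
    field_simp
    try ring

private lemma bnd19 (c μ : ℝ) (h1 : 1 ≤ μ * c) (h3 : μ * c ≤ 3)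
    (k n : ℕ) (hk : 2 ≤ k) (hn : k ≤ n) :
    ∏ i ∈ Finset.Icc (k + 1) n, |1 - (c / (i : ℝ)) * μ| ≤ (k : ℝ) / n := by
  calc ∏ i ∈ Finset.Icc (k + 1) n, |1 - (c / (i : ℝ)) * μ|
      ≤ ∏ i ∈ Finset.Icc (k + 1) n, (((i : ℝ) - 1) / i) := by
        apply Finset.prod_le_prod (fun i _ => abs_nonneg _)
        intro i hi
        have hi3 : 3 ≤ i := by
          have := (Finset.mem_Icc.mp hi).1; omega
        have hi3' : (3 : ℝ) ≤ i := by exact_mod_cast hi3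
        have hip : (0 : ℝ) < i := by linarith
        have hrw : c / (i : ℝ) * μ = μ * c / i := by ring
        rw [hrw]
        have hle1 : μ * c / i ≤ 1 := (div_le_one hip).mpr (by linarith)
        have hge : 1 / (i : ℝ) ≤ μ * c / i := by gcongr
        rw [abs_of_nonneg (by linarith)]
        have heq : ((i : ℝ) - 1) / i = 1 - 1 / i := by field_simp
        linarith
    _ = (k : ℝ) / n := tele19 k (by omega) n hn

/-- bounds on the products Q_{k+1:n} = ∏_{i=k+1}^n |1 - α_i μ| with
α_i = c/i and 1 ≤ μc ≤ 3. -/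
theorem stmt19
    (c μ : ℝ) (hc : 0 < c) (hμ : 0 < μ)
    (h1 : 1 ≤ μ * c) (h3 : μ * c ≤ 3) (n : ℕ) :
    (∀ k : ℕ, 2 ≤ k → k ≤ n - 1 →
      ∏ i ∈ Finset.Icc (k + 1) n, |1 - (c / (i : ℝ)) * μ| ≤ ((k : ℝ) + 1) / ((n : ℝ) + 1)) ∧
    (∏ i ∈ Finset.Icc 2 n, |1 - (c / (i : ℝ)) * μ| ≤ 4 * 2 / ((n : ℝ) + 1)) ∧
    (∏ i ∈ Finset.Icc 1 n, |1 - (c / (i : ℝ)) * μ| ≤ 15 / ((n : ℝ) + 1)) := by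
  -- bound on the term at i = 2
  have ht2 : |1 - (c / (2 : ℝ)) * μ| ≤ 1 / 2 := by
    have : c / (2 : ℝ) * μ = μ * c / 2 := by ring
    rw [this, abs_le]
    constructor <;> [linarith; linarith]
  -- bound on the term at i = 1
  have ht1 : |1 - (c / (1 : ℝ)) * μ| ≤ 2 := by
    have : c / (1 : ℝ) * μ = μ * c := by ring
    rw [this, abs_le]
    constructor <;> [linarith; linarith]
  -- the key bound for Icc 2 n products, n ≥ 2
  have h2n : ∀ m : ℕ, 2 ≤ m → ∏ i ∈ Finset.Icc 2 m, |1 - (c / (i : ℝ)) * μ| ≤ 1 / m := by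
    intro m hm
    have hsplit : Finset.Icc 2 m = insert 2 (Finset.Icc 3 m) := by
      ext x; simp [Finset.mem_Icc, Finset.mem_insert]; omega
    rw [hsplit, Finset.prod_insert (by simp)]
    have hb := bnd19 c μ h1 h3 2 m le_rfl hm
    have hm0 : (0 : ℝ) < m := by positivity
    have hprodnn : (0 : ℝ) ≤ ∏ i ∈ Finset.Icc (2 + 1) m, |1 - (c / (i : ℝ)) * μ| :=
      Finset.prod_nonneg fun i _ => abs_nonneg _
    have habs : (0 : ℝ) ≤ |1 - (c / (2 : ℝ)) * μ| := abs_nonneg _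
    calc |1 - (c / ((2 : ℕ) : ℝ)) * μ| * ∏ i ∈ Finset.Icc 3 m, |1 - (c / (i : ℝ)) * μ|
        ≤ (1 / 2) * ((2 : ℝ) / m) := by
          push_cast
          exact mul_le_mul ht2 hb hprodnn (by norm_num)
      _ = 1 / m := by field_simp
  refine ⟨?_, ?_, ?_⟩
  · intro k hk hkn
    have hn1 : 1 ≤ n := by omega
    have hkn' : k + 1 ≤ n := by omega
    have hb := bnd19 c μ h1 h3 k n hk (by omega)
    have hn0 : (0 : ℝ) < n := by positivity
    have hkn'' : (k : ℝ) ≤ n := by exact_mod_cast (by omega : k ≤ n)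
    calc ∏ i ∈ Finset.Icc (k + 1) n, |1 - (c / (i : ℝ)) * μ| ≤ (k : ℝ) / n := hb
      _ ≤ ((k : ℝ) + 1) / ((n : ℝ) + 1) := by
          rw [div_le_div_iff₀ hn0 (by linarith)]
          nlinarith
  · rcases lt_or_ge n 2 with hn | hn
    · rw [Finset.Icc_eq_empty (by omega), Finset.prod_empty]
      have : (n : ℝ) ≤ 1 := by exact_mod_cast (by omega : n ≤ 1)
      rw [le_div_iff₀ (by linarith)]
      linarith
    · have hn0 : (0 : ℝ) < n := by positivity
      have hn2 : (2 : ℝ) ≤ n := by exact_mod_cast hn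
      calc ∏ i ∈ Finset.Icc 2 n, |1 - (c / (i : ℝ)) * μ| ≤ 1 / n := h2n n hn
        _ ≤ 4 * 2 / ((n : ℝ) + 1) := by
            rw [div_le_div_iff₀ hn0 (by linarith)]
            nlinarith
  · rcases lt_or_ge n 1 with hn | hn
    · interval_cases n
      simp
    · have hsplit : Finset.Icc 1 n = insert 1 (Finset.Icc 2 n) := by
        ext x; simp [Finset.mem_Icc, Finset.mem_insert]; omega
      rw [hsplit, Finset.prod_insert (by simp)]
      rcases lt_or_ge n 2 with hn2 | hn2
      · have hn1 : n = 1 := by omega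
        subst hn1
        rw [Finset.Icc_eq_empty (by omega), Finset.prod_empty, mul_one]
        push_cast
        calc |1 - c / 1 * μ| ≤ 2 := ht1
          _ ≤ 15 / (1 + 1) := by norm_num
      · have hn0 : (0 : ℝ) < n := by positivity
        have hn2' : (2 : ℝ) ≤ n := by exact_mod_cast hn2
        have hprodnn : (0 : ℝ) ≤ ∏ i ∈ Finset.Icc 2 n, |1 - (c / (i : ℝ)) * μ| :=
          Finset.prod_nonneg fun i _ => abs_nonneg _
        calc |1 - (c / ((1 : ℕ) : ℝ)) * μ| * ∏ i ∈ Finset.Icc 2 n, |1 - (c / (i : ℝ)) * μ|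
            ≤ 2 * (1 / n) := by
              push_cast
              exact mul_le_mul ht1 (h2n n hn2) hprodnn (by norm_num)
          _ ≤ 15 / ((n : ℝ) + 1) := by
              rw [mul_one_div, div_le_div_iff₀ (by positivity) (by linarith)]
              nlinarith
end
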